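/- Suppose λ ∈ K is not equal to −p for any positive integer p. Then: the kernel of the even part of D(m) equals the image under D(−1) of the odd part of C(−1); and the image under D(−1) of the even part of C(−1) is a codimension-1 subspace of the kernel of the odd part of D(m), with O5 a cocycle not lying in this image. That is, H^{m+2}(d_λ) is 1-dimensional and odd, spanned by the class of ψ^{1,1,m}_1, the tangent direction along the family d_λ. -/
import Mathlib


namespace LinfCohomology

variable {K : Type*} [Field K] [CharZero K]

/- Cochain conventions: for `n ≥ 0`, the even part of `C(n)` has coordinates
`E1,…,E6` (for `φ^{1,0,n+1}_1, φ^{1,0,n+1}_2, φ^{0,1,n+1}_1, φ^{0,1,n+1}_2,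
φ^{0,0,n+2}_3, φ^{1,1,n}_3`) and the odd part has coordinates `O1,…,O6` (for
`ψ^{1,0,n+1}_3, ψ^{0,1,n+1}_3, ψ^{0,0,n+2}_1, ψ^{0,0,n+2}_2, ψ^{1,1,n}_1,
ψ^{1,1,n}_2`); `C(-1)` has even coordinates `E1,…,E5` and odd `O1,…,O4`. -/

/-- The even part of the coboundary operator `D(n)` of
`d_λ = ψ^{0,1,m+1}_3 + λψ^{1,1,m}_1`, for `n ≥ 0`:
`E1 ↦ -(n+1)O5`, `E2 ↦ -O1+(λ-n-1)O6`, `E3 ↦ 0`, `E4 ↦ -O2-λO5`,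
`E5 ↦ (n+1-m)O2-λmO5`, `E6 ↦ 0`. -/
def De (m : ℕ) (lam : K) (n : ℕ) : (Fin 6 → K) →ₗ[K] (Fin 6 → K) :=
  Matrix.mulVecLin
    !![0, -1, 0, 0, 0, 0;
       0, 0, 0, -1, (n : K) + 1 - (m : K), 0;
       0, 0, 0, 0, 0, 0;
       0, 0, 0, 0, 0, 0;
       -((n : K) + 1), 0, 0, -lam, -(lam * (m : K)), 0;
       0, lam - (n : K) - 1, 0, 0, 0, 0]

/-- The odd part of the coboundary operator `D(n)` of `d_λ`, for `n ≥ 0`: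
`O1 ↦ (λ+m-n)E6`, `O2 ↦ 0`, `O3 ↦ (λ+n+2)E3`, `O4 ↦ -λE1+(n+2)E4+E5`,
`O5 ↦ 0`, `O6 ↦ E6`. -/
def Do (m : ℕ) (lam : K) (n : ℕ) : (Fin 6 → K) →ₗ[K] (Fin 6 → K) :=
  Matrix.mulVecLin
    !![0, 0, 0, -lam, 0, 0;
       0, 0, 0, 0, 0, 0;
       0, 0, lam + (n : K) + 2, 0, 0, 0;
       0, 0, 0, (n : K) + 2, 0, 0;
       0, 0, 0, 1, 0, 0;
       lam + (m : K) - (n : K), 0, 0, 0, 0, 1]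

/-- The even part of `D(-1)` of `d_λ` (on degree-1 cochains):
`E1 ↦ 0`, `E2 ↦ -O1+λO6`, `E3 ↦ 0`, `E4 ↦ -O2-λO5`, `E5 ↦ -mO2-λmO5`. -/
def DeNeg1 (m : ℕ) (lam : K) : (Fin 5 → K) →ₗ[K] (Fin 6 → K) :=
  Matrix.mulVecLin
    !![0, -1, 0, 0, 0;
       0, 0, 0, -1, -(m : K);
       0, 0, 0, 0, 0;
       0, 0, 0, 0, 0;
       0, 0, 0, -lam, -(lam * (m : K));
       0, lam, 0, 0, 0]

/-- The odd part of `D(-1)` of `d_λ` (on degree-1 cochains):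
`O1 ↦ (λ+m+1)E6`, `O2 ↦ 0`, `O3 ↦ (λ+1)E3`, `O4 ↦ -λE1+E4+E5`. -/
def DoNeg1 (m : ℕ) (lam : K) : (Fin 4 → K) →ₗ[K] (Fin 6 → K) :=
  Matrix.mulVecLin
    !![0, 0, 0, -lam;
       0, 0, 0, 0;
       0, 0, lam + 1, 0;
       0, 0, 0, 1;
       0, 0, 0, 1;
       lam + (m : K) + 1, 0, 0, 0]

open Matrix in
@[simp] lemma aux_cons_val_five {α : Type*} {m : ℕ} (x : α) (u : Fin (m+5) → α) :
    Matrix.vecCons x u 5 =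
      Matrix.vecHead (Matrix.vecTail (Matrix.vecTail (Matrix.vecTail (Matrix.vecTail u)))) := rfl

/-- Parametrization of the kernel of `Do m lam m`. -/
def auxL (lam : K) : (Fin 3 → K) →ₗ[K] (Fin 6 → K) :=
  Matrix.mulVecLin !![1, 0, 0; 0, 1, 0; 0, 0, 0; 0, 0, 0; 0, 0, 1; -lam, 0, 0]

/-- Parametrization of the range of `DeNeg1 m lam`. -/
def auxM (lam : K) : (Fin 2 → K) →ₗ[K] (Fin 6 → K) :=
  Matrix.mulVecLin !![1, 0; 0, 1; 0, 0; 0, 0; 0, lam; -lam, 0]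

set_option maxHeartbeats 1000000 in
/-- If `λ` is not a negative integer: the kernel of the even part of `D(m)` equals
the image under `D(-1)` of the odd part of `C(-1)`, and the image under `D(-1)` of
the even part of `C(-1)` is a codimension-1 subspace of the kernel of the odd part
of `D(m)`, with `O5` a cocycle not lying in this image. That is, `H^{m+2}(d_λ)`
is 1-dimensional and odd, spanned by the class of `ψ^{1,1,m}_1`. -/
theorem dLam_middle_cohomology (m : ℕ) (lam : K)
    (hlam : ∀ p : ℕ, 0 < p → lam ≠ -(p : K)) :
    LinearMap.range (DoNeg1 m lam) = LinearMap.ker (De m lam m) ∧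
    LinearMap.range (DeNeg1 m lam) ≤ LinearMap.ker (Do m lam m) ∧
    (![0, 0, 0, 0, 1, 0] : Fin 6 → K) ∈ LinearMap.ker (Do m lam m) ∧
    (![0, 0, 0, 0, 1, 0] : Fin 6 → K) ∉ LinearMap.range (DeNeg1 m lam) ∧
    Module.finrank K (LinearMap.ker (Do m lam m)) =
      Module.finrank K (LinearMap.range (DeNeg1 m lam)) + 1 := by
  have hl1 : lam + 1 ≠ 0 := by
    intro h; exact hlam 1 one_pos (by push_cast; linear_combination h)
  have hlm1 : lam + (m : K) + 1 ≠ 0 := by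
    intro h; exact hlam (m + 1) (by omega) (by push_cast; linear_combination h)
  have hlm2 : lam + (m : K) + 2 ≠ 0 := by
    intro h; exact hlam (m + 2) (by omega) (by push_cast; linear_combination h)
  have hm1 : ((m : K) + 1) ≠ 0 := by
    have := Nat.cast_add_one_ne_zero (R := K) m; exact_mod_cast this
  have hm2 : ((m : K) + 2) ≠ 0 := by
    intro h; exact Nat.cast_add_one_ne_zero (R := K) (m + 1) (by push_cast; linear_combination h)
  refine ⟨?_, ?_, ?_, ?_, ?_⟩
  · -- range DoNeg1 = ker De
    apply le_antisymm
    · rintro _ ⟨o, rfl⟩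
      rw [LinearMap.mem_ker]
      funext i
      fin_cases i <;>
        (try simp [De, DoNeg1, Matrix.mulVecLin_apply, Matrix.mulVec, dotProduct, Fin.sum_univ_six,
          Fin.sum_univ_five, Fin.sum_univ_four, Fin.sum_univ_three, Fin.sum_univ_two,
          Matrix.cons_val_two, Matrix.cons_val_three, Matrix.cons_val_four,
          Matrix.vecHead, Matrix.vecTail]) <;>
        ring
    · intro x hx
      rw [LinearMap.mem_ker] at hx
      have h0 := congrFun hx 0
      have h1 := congrFun hx 1
      have h4 := congrFun hx 4
      simp [De, Matrix.mulVecLin_apply, Matrix.mulVec, dotProduct, Fin.sum_univ_six,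
          Fin.sum_univ_five, Fin.sum_univ_four, Fin.sum_univ_three, Fin.sum_univ_two,
          Matrix.cons_val_two, Matrix.cons_val_three, Matrix.cons_val_four,
          Matrix.vecHead, Matrix.vecTail] at h0 h1 h4
      have hx4 : x 4 = x 3 := by linear_combination h1
      have hx0 : x 0 = -(lam * x 3) := by
        apply mul_left_cancel₀ hm1
        linear_combination -h4 - lam * (m : K) * h1
      refine ⟨![x 5 / (lam + (m : K) + 1), 0, x 2 / (lam + 1), x 3], ?_⟩
      funext i
      fin_cases i <;>
        (try simp [DoNeg1, Matrix.mulVecLin_apply, Matrix.mulVec, dotProduct, Fin.sum_univ_six,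
          Fin.sum_univ_five, Fin.sum_univ_four, Fin.sum_univ_three, Fin.sum_univ_two,
          Matrix.cons_val_two, Matrix.cons_val_three, Matrix.cons_val_four,
          Matrix.vecHead, Matrix.vecTail]) <;> (try field_simp)
      · exact hx0.symm
      · exact h0.symm
      · exact hx4.symm
  · -- range DeNeg1 ≤ ker Do
    rintro _ ⟨e, rfl⟩
    rw [LinearMap.mem_ker]
    funext i
    fin_cases i <;>
      (try simp [Do, DeNeg1, Matrix.mulVecLin_apply, Matrix.mulVec, dotProduct, Fin.sum_univ_six,
          Fin.sum_univ_five, Fin.sum_univ_four, Fin.sum_univ_three, Fin.sum_univ_two,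
          Matrix.cons_val_two, Matrix.cons_val_three, Matrix.cons_val_four,
          Matrix.vecHead, Matrix.vecTail]) <;>
      ring
  · -- O5 is a cocycle
    rw [LinearMap.mem_ker]
    funext i
    fin_cases i <;>
      simp [Do, Matrix.mulVecLin_apply, Matrix.mulVec, dotProduct, Fin.sum_univ_six,
          Fin.sum_univ_five, Fin.sum_univ_four, Fin.sum_univ_three, Fin.sum_univ_two,
          Matrix.cons_val_two, Matrix.cons_val_three, Matrix.cons_val_four,
          Matrix.vecHead, Matrix.vecTail]
  · -- O5 is not a coboundary
    rintro ⟨e, he⟩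
    have h1 := congrFun he 1
    have h4 := congrFun he 4
    simp [DeNeg1, Matrix.mulVecLin_apply, Matrix.mulVec, dotProduct, Fin.sum_univ_six,
          Fin.sum_univ_five, Fin.sum_univ_four, Fin.sum_univ_three, Fin.sum_univ_two,
          Matrix.cons_val_two, Matrix.cons_val_three, Matrix.cons_val_four,
          Matrix.vecHead, Matrix.vecTail] at h1 h4
    exact one_ne_zero (α := K) (by linear_combination lam * h1 - h4)
  · -- dimension count
    have hLinj : Function.Injective (auxL (K := K) lam) := by
      intro a b hab
      have h0 := congrFun hab 0
      have h1 := congrFun hab 1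
      have h4 := congrFun hab 4
      simp [auxL, Matrix.mulVecLin_apply, Matrix.mulVec, dotProduct, Fin.sum_univ_six,
          Fin.sum_univ_five, Fin.sum_univ_four, Fin.sum_univ_three, Fin.sum_univ_two,
          Matrix.cons_val_two, Matrix.cons_val_three, Matrix.cons_val_four,
          Matrix.vecHead, Matrix.vecTail] at h0 h1 h4
      funext i
      fin_cases i
      · exact h0
      · exact h1
      · exact h4
    have hMinj : Function.Injective (auxM (K := K) lam) := by
      intro a b hab
      have h0 := congrFun hab 0
      have h1 := congrFun hab 1
      simp [auxM, Matrix.mulVecLin_apply, Matrix.mulVec, dotProduct, Fin.sum_univ_six,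
          Fin.sum_univ_five, Fin.sum_univ_four, Fin.sum_univ_three, Fin.sum_univ_two,
          Matrix.cons_val_two, Matrix.cons_val_three, Matrix.cons_val_four,
          Matrix.vecHead, Matrix.vecTail] at h0 h1
      funext i
      fin_cases i
      · exact h0
      · exact h1
    have hLrange : LinearMap.range (auxL (K := K) lam) = LinearMap.ker (Do m lam m) := by
      apply le_antisymm
      · rintro _ ⟨c, rfl⟩
        rw [LinearMap.mem_ker]
        funext i
        fin_cases i <;>
          (try simp [Do, auxL, Matrix.mulVecLin_apply, Matrix.mulVec, dotProduct, Fin.sum_univ_six,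
          Fin.sum_univ_five, Fin.sum_univ_four, Fin.sum_univ_three, Fin.sum_univ_two,
          Matrix.cons_val_two, Matrix.cons_val_three, Matrix.cons_val_four,
          Matrix.vecHead, Matrix.vecTail]) <;>
          ring
      · intro x hx
        rw [LinearMap.mem_ker] at hx
        have h2 := congrFun hx 2
        have h3 := congrFun hx 3
        have h5 := congrFun hx 5
        simp [Do, Matrix.mulVecLin_apply, Matrix.mulVec, dotProduct, Fin.sum_univ_six,
          Fin.sum_univ_five, Fin.sum_univ_four, Fin.sum_univ_three, Fin.sum_univ_two,
          Matrix.cons_val_two, Matrix.cons_val_three, Matrix.cons_val_four,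
          Matrix.vecHead, Matrix.vecTail] at h2 h3 h5
        have hx2 : x 2 = 0 := h2.resolve_left hlm2
        have hx3 : x 3 = 0 := h3.resolve_left hm2
        refine ⟨![x 0, x 1, x 4], ?_⟩
        funext i
        fin_cases i <;>
          (try simp [auxL, Matrix.mulVecLin_apply, Matrix.mulVec, dotProduct,
            Fin.sum_univ_three, Matrix.cons_val_two, Matrix.cons_val_three, Matrix.cons_val_four,
            Matrix.vecHead, Matrix.vecTail])
        · exact hx2.symm
        · exact hx3.symm
        · linear_combination -h5
    have hMrange : LinearMap.range (auxM (K := K) lam) = LinearMap.range (DeNeg1 m lam) := by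
      apply le_antisymm
      · rintro _ ⟨c, rfl⟩
        refine ⟨![0, -c 0, 0, -c 1, 0], ?_⟩
        funext i
        fin_cases i <;>
          (try simp [DeNeg1, auxM, Matrix.mulVecLin_apply, Matrix.mulVec, dotProduct, Fin.sum_univ_six,
          Fin.sum_univ_five, Fin.sum_univ_four, Fin.sum_univ_three, Fin.sum_univ_two,
          Matrix.cons_val_two, Matrix.cons_val_three, Matrix.cons_val_four,
          Matrix.vecHead, Matrix.vecTail]) <;>
          ring
      · rintro _ ⟨e, rfl⟩
        refine ⟨![-e 1, -(e 3 + (m : K) * e 4)], ?_⟩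
        funext i
        fin_cases i <;>
          (try simp [DeNeg1, auxM, Matrix.mulVecLin_apply, Matrix.mulVec, dotProduct, Fin.sum_univ_six,
          Fin.sum_univ_five, Fin.sum_univ_four, Fin.sum_univ_three, Fin.sum_univ_two,
          Matrix.cons_val_two, Matrix.cons_val_three, Matrix.cons_val_four,
          Matrix.vecHead, Matrix.vecTail]) <;>
          ring
    rw [← hLrange, ← hMrange, LinearMap.finrank_range_of_inj hLinj,
      LinearMap.finrank_range_of_inj hMinj, Module.finrank_fin_fun, Module.finrank_fin_fun]

end LinfCohomology
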